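/- Let ℓ > 1 and let U be a word such that for every pair of distinct variables x, y in U, the projection U(x,y) has height at most ℓ. Let Θ be a substitution from variables to nonempty words satisfying: for all x, y occurring in u, if Θ(x) and Θ(y) are powers of the same variable then x = y. If Θ(u) = U, then for every pair of distinct variables x, y in u, the projection u(x,y) has height at most ℓ. -/

import Mathlib

/-- Two words have the same type: equal up to changing the positive exponents of
their maximal single-letter blocks. -/
def SameType {α : Type*} (u v : List α) : Prop :=
  ∃ L : List (α × ℕ × ℕ),
    (∀ p ∈ L, 0 < p.2.1 ∧ 0 < p.2.2) ∧
    List.Chain' (fun p q => p.1 ≠ q.1) L ∧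
    u = L.flatMap (fun p => List.replicate p.2.1 p.1) ∧
    v = L.flatMap (fun p => List.replicate p.2.2 p.1)

/-- The height of a word: the number of islands (maximal one-letter power factors). -/
def height {α : Type*} [DecidableEq α] (u : List α) : ℕ :=
  (u.destutter (· ≠ ·)).length

/-- A monoid M satisfies the identity u ≈ v (words in countably many variables). -/
def SatM (M : Type*) [Monoid M] (u v : List ℕ) : Prop :=
  ∀ θ : ℕ → M, (u.map θ).prod = (v.map θ).prod

/-- Property (C_ℓ): every word over a two-letter alphabet {x,y} of height at most ℓ
can form an identity of M only with a word of the same type. -/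
def PropC (M : Type*) [Monoid M] (ℓ : ℕ) : Prop :=
  ∀ x y : ℕ, x ≠ y → ∀ u v : List ℕ, u ≠ [] → (∀ z ∈ u, z = x ∨ z = y) →
    height u ≤ ℓ → SatM M u v → SameType u v

/-- `assemble [a₀,a₁,…,a_m] [t₁,…,t_m] = a₀ t₁ a₁ t₂ ⋯ t_m a_m`:  the word with
blocks a_q separated by the linear letters t_q. -/
def assemble : List (List ℕ) → List ℕ → List ℕ
  | [], _ => []
  | a :: _, [] => a
  | a :: A, t :: T => a ++ t :: assemble A T

/-- u(x,y): the word obtained from u by deleting all occurrences of variables other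
than x and y. -/
def proj (u : List ℕ) (x y : ℕ) : List ℕ := u.filter (fun z => z == x || z == y)

/-- w is a (positive) power of the variable c. -/
def isPow (w : List ℕ) (c : ℕ) : Prop := ∃ m, 0 < m ∧ w = List.replicate m c

lemma destutter'_max {α : Type*} [DecidableEq α] :
    ∀ l : List α,
      (∀ (a : α) (s : List α), List.Sublist s l → s.Chain' (· ≠ ·) →
        s.length ≤ (l.destutter' (· ≠ ·) a).length) ∧
      (∀ (a : α) (s : List α), List.Sublist s l → (a :: s).Chain' (· ≠ ·) →
        (a :: s).length ≤ (l.destutter' (· ≠ ·) a).length) := by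
  intro l
  induction l with
  | nil =>
    refine ⟨?_, ?_⟩ <;> intro a s hs _ <;>
      simp [List.sublist_nil.mp hs, List.destutter']
  | cons b l ih =>
    obtain ⟨ihA, ihB⟩ := ih
    constructor
    · intro a s hs hc
      rw [List.destutter'_cons]
      cases hs with
      | cons _ hs' =>
        by_cases hab : a ≠ b
        · rw [if_pos hab]
          have := ihA b s hs' hc
          simpa using Nat.le_succ_of_le this
        · rw [if_neg hab]
          exact ihA a s hs' hc
      | cons_cons _ hs' =>
        rename_i s'
        have hc' : (b :: s').Chain' (· ≠ ·) := hc
        have hB := ihB b s' hs' hc'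
        by_cases hab : a ≠ b
        · rw [if_pos hab]
          simpa using Nat.le_succ_of_le hB
        · rw [if_neg hab]
          have : a = b := not_ne_iff.mp hab
          subst this
          exact hB
    · intro a s hs hc
      rw [List.destutter'_cons]
      cases hs with
      | cons _ hs' =>
        by_cases hab : a ≠ b
        · rw [if_pos hab]
          have := ihA b s hs' hc.tail
          simpa using this
        · rw [if_neg hab]
          exact ihB a s hs' hc
      | cons_cons _ hs' =>
        rename_i s'
        have hab : a ≠ b := (List.isChain_cons_cons.mp hc).1
        rw [if_pos hab]
        have := ihB b s' hs' hc.tail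
        simpa using this

lemma chain'_sublist_le_height {α : Type*} [DecidableEq α] {s w : List α}
    (hs : List.Sublist s w) (hc : s.Chain' (· ≠ ·)) : s.length ≤ height w := by
  cases w with
  | nil => simp [List.sublist_nil.mp hs, height]
  | cons b w' =>
    rw [height, List.destutter_cons']
    cases hs with
    | cons _ hs' => exact (destutter'_max w').1 b s hs' hc
    | cons_cons _ hs' => exact (destutter'_max w').2 b _ hs' hc

lemma sublist_flatMap {s u : List ℕ} (h : List.Sublist s u) (f g : ℕ → List ℕ)
    (hfg : ∀ z, List.Sublist (f z) (g z)) : List.Sublist (s.flatMap f) (u.flatMap g) := by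
  induction h with
  | slnil => simp
  | cons a h ih =>
    rw [List.flatMap_cons]
    exact ih.trans (List.sublist_append_right _ _)
  | cons_cons a h ih =>
    rw [List.flatMap_cons, List.flatMap_cons]
    exact (hfg a).append ih

lemma chain'_map_ne {g : ℕ → ℕ} {x y : ℕ} (hg : g x ≠ g y) :
    ∀ s : List ℕ, (∀ z ∈ s, z = x ∨ z = y) → s.Chain' (· ≠ ·) →
      (s.map g).Chain' (· ≠ ·) := by
  intro s
  induction s with
  | nil => simp
  | cons a t ih =>
    intro hmem hch
    rw [List.map_cons]
    cases t with
    | nil => exact List.isChain_singleton _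
    | cons b t' =>
      simp only [List.map_cons, List.Chain', List.isChain_cons_cons]
      refine ⟨?_, ?_⟩
      · have hab : a ≠ b := (List.isChain_cons_cons.mp hch).1
        rcases hmem a (by simp) with ha|ha <;> rcases hmem b (by simp) with hb|hb <;>
          subst ha <;> subst hb
        · exact absurd rfl hab
        · exact hg
        · exact hg.symm
        · exact absurd rfl hab
      · have := ih (fun z hz => hmem z (List.mem_cons_of_mem _ hz)) hch.tail
        rw [List.map_cons] at this; exact this


/-- Let ℓ > 1 and U a word all of whose two-variable projections U(x,y) have height
at most ℓ.  Let Θ be a substitution into nonempty words such that distinct variables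
of u never have images that are powers of the same variable.  If Θ(u) = U then all
two-variable projections u(x,y) also have height at most ℓ. -/
theorem stmt15 (ℓ : ℕ) (hℓ : 1 < ℓ) (U u : List ℕ) (Θ : ℕ → List ℕ)
    (hne : ∀ x, Θ x ≠ [])
    (hU : ∀ x y, x ∈ U → y ∈ U → x ≠ y → height (proj U x y) ≤ ℓ)
    (hpow : ∀ x ∈ u, ∀ y ∈ u, (∃ c, isPow (Θ x) c ∧ isPow (Θ y) c) → x = y)
    (hΘu : u.flatMap Θ = U) :
    ∀ x y, x ∈ u → y ∈ u → x ≠ y → height (proj u x y) ≤ ℓ := by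
  intro x y hx hy hxy
  have hsel : ∃ c ∈ Θ x, ∃ d ∈ Θ y, c ≠ d := by
    by_contra H
    push_neg at H
    obtain ⟨b, hb⟩ := List.exists_mem_of_ne_nil (Θ y) (hne y)
    obtain ⟨a, ha⟩ := List.exists_mem_of_ne_nil (Θ x) (hne x)
    have hxall : ∀ c ∈ Θ x, c = b := fun c hc => H c hc b hb
    have hab : a = b := hxall a ha
    have hyall : ∀ d ∈ Θ y, d = b := fun d hd => (H a ha d hd) ▸ hab
    apply hxy
    apply hpow x hx y hy
    refine ⟨b, ⟨(Θ x).length, List.length_pos_iff.mpr (hne x), ?_⟩,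
      ⟨(Θ y).length, List.length_pos_iff.mpr (hne y), ?_⟩⟩
    · exact List.eq_replicate_of_mem hxall
    · exact List.eq_replicate_of_mem hyall
  obtain ⟨c, hcΘ, d, hdΘ, hcd⟩ := hsel
  have hcU : c ∈ U := by rw [← hΘu]; exact List.mem_flatMap.mpr ⟨x, hx, hcΘ⟩
  have hdU : d ∈ U := by rw [← hΘu]; exact List.mem_flatMap.mpr ⟨y, hy, hdΘ⟩
  set s := (proj u x y).destutter (· ≠ ·) with hsdef
  have hs1 : List.Sublist s (proj u x y) := List.destutter_sublist _ _
  have hs2 : s.Chain' (· ≠ ·) := List.isChain_destutter _ _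
  have hsmem : ∀ z ∈ s, z = x ∨ z = y := by
    intro z hz
    have hzp : z ∈ proj u x y := hs1.mem hz
    have := List.of_mem_filter hzp
    simpa using this
  have hsu : List.Sublist s u := hs1.trans List.filter_sublist
  set f : ℕ → List ℕ := fun z => if z = x then [c] else if z = y then [d] else []
    with hfdef
  set g : ℕ → ℕ := fun z => if z = x then c else d with hgdef
  have hfΘ : ∀ z, List.Sublist (f z) (Θ z) := by
    intro z
    simp only [hfdef]
    split_ifs with h1 h2
    · subst h1; exact List.singleton_sublist.mpr hcΘ
    · subst h2; exact List.singleton_sublist.mpr hdΘ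
    · exact List.nil_sublist _
  have hTU : List.Sublist (s.flatMap f) U := by
    rw [← hΘu]; exact sublist_flatMap hsu f Θ hfΘ
  have hfm : ∀ t : List ℕ, (∀ z ∈ t, z = x ∨ z = y) → t.flatMap f = t.map g := by
    intro t
    induction t with
    | nil => simp
    | cons a t ih =>
      intro h
      rw [List.flatMap_cons, List.map_cons, ih (fun z hz => h z (List.mem_cons_of_mem _ hz))]
      rcases h a List.mem_cons_self with h'|h' <;> subst h' <;>
        simp [hfdef, hgdef, Ne.symm hxy]
  have hg : g x ≠ g y := by simp [hgdef, Ne.symm hxy]; exact hcd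
  have hTchain : (s.map g).Chain' (· ≠ ·) := chain'_map_ne hg s hsmem hs2
  have hmemT : ∀ w ∈ s.map g, w = c ∨ w = d := by
    intro w hw
    obtain ⟨z, hz, rfl⟩ := List.mem_map.mp hw
    rcases hsmem z hz with h|h <;> subst h <;> simp [hgdef, Ne.symm hxy]
  have hTproj : List.Sublist (s.map g) (proj U c d) := by
    have h1 : (s.map g).filter (fun z => z == c || z == d) = s.map g :=
      List.filter_eq_self.mpr (by intro a ha; rcases hmemT a ha with h|h <;> simp [h])
    rw [proj, ← h1]
    exact List.Sublist.filter _ (hfm s hsmem ▸ hTU)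
  have hfin : (s.map g).length ≤ height (proj U c d) :=
    chain'_sublist_le_height hTproj hTchain
  calc height (proj u x y) = s.length := rfl
    _ = (s.map g).length := (List.length_map _).symm
    _ ≤ height (proj U c d) := hfin
    _ ≤ ℓ := hU c d hcU hdU hcd
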